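/- Let m and n be integers greater than 1 such that p = gcd(m,n) is an odd prime and gcd(p·m, n) = gcd(m, p·n) = p. Then τ(T_{m×n}) = τ(T_{p×p}). -/

import Mathlib

/-- Projection `π_{m,n} : ℤ×ℤ → (ℤ/mℤ)×(ℤ/nℤ)`. -/
def torusProj (m n : ℕ) (P : ℤ × ℤ) : ZMod m × ZMod n :=
  ((P.1 : ZMod m), (P.2 : ZMod n))

/-- `L` is a line on the discrete torus `T_{m×n}`: the image under `π_{m,n}`
of `{(a+uk, b+vk) : k ∈ ℤ}` with `gcd(u,v)=1`. -/
def IsTorusLine (m n : ℕ) (L : Set (ZMod m × ZMod n)) : Prop :=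
  ∃ a b u v : ℤ, Int.gcd u v = 1 ∧
    L = torusProj m n '' {P : ℤ × ℤ | ∃ k : ℤ, P = (a + u * k, b + v * k)}

/-- `X` satisfies the no-three-in-line condition on `T_{m×n}`:
no three distinct points of `X` lie on a common line. -/
def NoThreeInLine (m n : ℕ) (X : Set (ZMod m × ZMod n)) : Prop :=
  ∀ L : Set (ZMod m × ZMod n), IsTorusLine m n L →
    ∀ A ∈ X, ∀ B ∈ X, ∀ C ∈ X,
      A ∈ L → B ∈ L → C ∈ L → A = B ∨ A = C ∨ B = C

/-- `τ(T_{m×n})`: the maximum cardinality of a subset of `T_{m×n}`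
satisfying the no-three-in-line condition. -/
noncomputable def tau (m n : ℕ) : ℕ :=
  sSup {k : ℕ | ∃ X : Set (ZMod m × ZMod n), NoThreeInLine m n X ∧ X.ncard = k}

/-- The reduction map `ρ : T_{m×n} → T_{p×p}` (for `p ∣ m`, `p ∣ n`). -/
def torusRed (m n p : ℕ) (hm : p ∣ m) (hn : p ∣ n)
    (q : ZMod m × ZMod n) : ZMod p × ZMod p :=
  (ZMod.castHom hm (ZMod p) q.1, ZMod.castHom hn (ZMod p) q.2)

/-- The determinant `D(A,B,C)` with rows `(1,1,1)`, x-coords, y-coords. -/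
def detD (A B C : ℤ × ℤ) : ℤ :=
  Matrix.det !![1, 1, 1; A.1, B.1, C.1; A.2, B.2, C.2]

namespace TauAux

def Collin (m n : ℕ) (A B C : ZMod m × ZMod n) : Prop :=
  ∃ L : Set (ZMod m × ZMod n), IsTorusLine m n L ∧ A ∈ L ∧ B ∈ L ∧ C ∈ L

lemma noThree_iff {m n : ℕ} {X : Set (ZMod m × ZMod n)} :
    NoThreeInLine m n X ↔
      ∀ A ∈ X, ∀ B ∈ X, ∀ C ∈ X, Collin m n A B C → A = B ∨ A = C ∨ B = C := by
  constructor
  · rintro h A hA B hB C hC ⟨L, hL, h1, h2, h3⟩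
    exact h L hL A hA B hB C hC h1 h2 h3
  · intro h L hL A hA B hB C hC m1 m2 m3
    exact h A hA B hB C hC ⟨L, hL, m1, m2, m3⟩

lemma mem_line' {m n : ℕ} (a b u v k : ℤ) {A : ZMod m × ZMod n}
    (h : A = torusProj m n (a + u * k, b + v * k)) :
    A ∈ torusProj m n '' {P : ℤ × ℤ | ∃ k : ℤ, P = (a + u * k, b + v * k)} :=
  ⟨_, ⟨k, rfl⟩, h.symm⟩

lemma collin_of_param (m n : ℕ) (A B C : ZMod m × ZMod n) (a b u v k₁ k₂ k₃ : ℤ)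
    (hA : A = torusProj m n (a + u * k₁, b + v * k₁))
    (hB : B = torusProj m n (a + u * k₂, b + v * k₂))
    (hC : C = torusProj m n (a + u * k₃, b + v * k₃)) :
    Collin m n A B C := by
  by_cases h0 : u = 0 ∧ v = 0
  · obtain ⟨rfl, rfl⟩ := h0
    refine ⟨_, ⟨a, b, 1, 0, by simp, rfl⟩, ?_, ?_, ?_⟩
    · exact mem_line' a b 1 0 0 (by rw [hA]; norm_num)
    · exact mem_line' a b 1 0 0 (by rw [hB]; norm_num)
    · exact mem_line' a b 1 0 0 (by rw [hC]; norm_num)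
  · have hd : 0 < Int.gcd u v := by
      rcases Int.gcd_pos_iff.2 (by tauto) with h; exact h
    set d : ℤ := (Int.gcd u v : ℤ) with hdd
    have hud : u / d * d = u := Int.ediv_mul_cancel (Int.gcd_dvd_left u v)
    have hvd : v / d * d = v := Int.ediv_mul_cancel (Int.gcd_dvd_right u v)
    have key : ∀ k : ℤ, (a + u * k, b + v * k) = (a + u/d * (d*k), b + v/d * (d*k)) := by
      intro k
      rw [← mul_assoc, ← mul_assoc, hud, hvd]
    refine ⟨_, ⟨a, b, u / d, v / d, Int.gcd_div_gcd_div_gcd hd, rfl⟩, ?_, ?_, ?_⟩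
    · exact mem_line' a b (u/d) (v/d) (d * k₁) (by rw [hA, key k₁])
    · exact mem_line' a b (u/d) (v/d) (d * k₂) (by rw [hB, key k₂])
    · exact mem_line' a b (u/d) (v/d) (d * k₃) (by rw [hC, key k₃])

lemma collin_elim {m n : ℕ} {A B C : ZMod m × ZMod n} (h : Collin m n A B C) :
    ∃ a b u v k₁ k₂ k₃ : ℤ,
      A = torusProj m n (a + u * k₁, b + v * k₁) ∧
      B = torusProj m n (a + u * k₂, b + v * k₂) ∧
      C = torusProj m n (a + u * k₃, b + v * k₃) := by
  obtain ⟨L, ⟨a, b, u, v, -, rfl⟩, hA, hB, hC⟩ := h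
  obtain ⟨P₁, ⟨k₁, rfl⟩, hA⟩ := hA
  obtain ⟨P₂, ⟨k₂, rfl⟩, hB⟩ := hB
  obtain ⟨P₃, ⟨k₃, rfl⟩, hC⟩ := hC
  exact ⟨a, b, u, v, k₁, k₂, k₃, hA.symm, hB.symm, hC.symm⟩

end TauAux

namespace TauAux

lemma red_proj (m n p : ℕ) (hm : p ∣ m) (hn : p ∣ n) (P : ℤ × ℤ) :
    torusRed m n p hm hn (torusProj m n P) = torusProj p p P := by
  unfold torusRed torusProj
  exact Prod.ext (map_intCast (ZMod.castHom hm (ZMod p)) P.1)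
    (map_intCast (ZMod.castHom hn (ZMod p)) P.2)

/-- Lines project to lines: collinearity descends to the reduction. -/
lemma collin_red (m n p : ℕ) (hm : p ∣ m) (hn : p ∣ n) {A B C : ZMod m × ZMod n}
    (h : Collin m n A B C) :
    Collin p p (torusRed m n p hm hn A) (torusRed m n p hm hn B) (torusRed m n p hm hn C) := by
  obtain ⟨a, b, u, v, k₁, k₂, k₃, hA, hB, hC⟩ := collin_elim h
  exact collin_of_param p p _ _ _ a b u v k₁ k₂ k₃
    (by rw [hA, red_proj]) (by rw [hB, red_proj]) (by rw [hC, red_proj])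

/-- Any two points lie on a common line. -/
lemma collin_two (m n : ℕ) [NeZero m] [NeZero n] (P Q : ZMod m × ZMod n) :
    Collin m n P Q Q := by
  set x₁ : ℤ := ZMod.cast P.1
  set y₁ : ℤ := ZMod.cast P.2
  set x₂ : ℤ := ZMod.cast Q.1
  set y₂ : ℤ := ZMod.cast Q.2
  have hP : P = torusProj m n (x₁, y₁) := by
    unfold torusProj
    exact Prod.ext (ZMod.intCast_zmod_cast P.1).symm (ZMod.intCast_zmod_cast P.2).symm
  have hQ : Q = torusProj m n (x₂, y₂) := by
    unfold torusProj
    exact Prod.ext (ZMod.intCast_zmod_cast Q.1).symm (ZMod.intCast_zmod_cast Q.2).symm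
  refine collin_of_param m n P Q Q x₁ y₁ (x₂ - x₁) (y₂ - y₁) 0 1 1 ?_ ?_ ?_
  · rw [hP]; norm_num
  · rw [hQ]; norm_num
  · rw [hQ]; norm_num

/-- CRT for two coprime integer moduli. -/
lemma int_crt2 (c₁ c₂ r₁ r₂ : ℤ) (h : IsCoprime c₁ c₂) :
    ∃ z : ℤ, c₁ ∣ z - r₁ ∧ c₂ ∣ z - r₂ := by
  obtain ⟨s, t, hst⟩ := h
  refine ⟨r₂ * (s * c₁) + r₁ * (t * c₂), ⟨(r₂ - r₁) * s, by linear_combination r₁ * hst⟩,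
    ⟨(r₁ - r₂) * t, by linear_combination r₂ * hst⟩⟩

/-- CRT for three pairwise coprime integer moduli. -/
lemma int_crt3 (c₁ c₂ c₃ r₁ r₂ r₃ : ℤ) (h12 : IsCoprime c₁ c₂) (h13 : IsCoprime c₁ c₃)
    (h23 : IsCoprime c₂ c₃) :
    ∃ z : ℤ, c₁ ∣ z - r₁ ∧ c₂ ∣ z - r₂ ∧ c₃ ∣ z - r₃ := by
  obtain ⟨w, hw2, hw3⟩ := int_crt2 c₂ c₃ r₂ r₃ h23
  obtain ⟨z, hz1, hz23⟩ := int_crt2 c₁ (c₂ * c₃) r₁ w (h12.mul_right h13)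
  refine ⟨z, hz1, ?_, ?_⟩
  · have h2 : c₂ ∣ z - w := (dvd_mul_right c₂ c₃).trans hz23
    simpa using dvd_add h2 hw2
  · have h3 : c₃ ∣ z - w := (dvd_mul_left c₃ c₂).trans hz23
    simpa using dvd_add h3 hw3

end TauAux

namespace TauAux

/-- Key lemma: collinearity of reductions lifts, given the coprimality structure. -/
lemma collin_lift (m n p m' n' : ℕ) [NeZero m] [NeZero n]
    (hmeq : m = p * m') (hneq : n = p * n')
    (cpm : Nat.Coprime p m') (cpn : Nat.Coprime p n') (cmn : Nat.Coprime m' n')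
    (dm : p ∣ m) (dn : p ∣ n)
    {A B C : ZMod m × ZMod n}
    (h : Collin p p (torusRed m n p dm dn A) (torusRed m n p dm dn B)
      (torusRed m n p dm dn C)) :
    Collin m n A B C := by
  obtain ⟨a, b, u, v, k₁, k₂, k₃, hA, hB, hC⟩ := collin_elim h
  have ipm : IsCoprime (p : ℤ) (m' : ℤ) := Nat.isCoprime_iff_coprime.mpr cpm
  have ipn : IsCoprime (p : ℤ) (n' : ℤ) := Nat.isCoprime_iff_coprime.mpr cpn
  have imn : IsCoprime (m' : ℤ) (n' : ℤ) := Nat.isCoprime_iff_coprime.mpr cmn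
  -- integer lifts of the points
  set x₁ : ℤ := ZMod.cast A.1 with hx₁
  set y₁ : ℤ := ZMod.cast A.2 with hy₁
  set x₂ : ℤ := ZMod.cast B.1 with hx₂
  set y₂ : ℤ := ZMod.cast B.2 with hy₂
  set x₃ : ℤ := ZMod.cast C.1 with hx₃
  set y₃ : ℤ := ZMod.cast C.2 with hy₃
  have hAl : A = torusProj m n (x₁, y₁) :=
    Prod.ext (ZMod.intCast_zmod_cast A.1).symm (ZMod.intCast_zmod_cast A.2).symm
  have hBl : B = torusProj m n (x₂, y₂) :=
    Prod.ext (ZMod.intCast_zmod_cast B.1).symm (ZMod.intCast_zmod_cast B.2).symm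
  have hCl : C = torusProj m n (x₃, y₃) :=
    Prod.ext (ZMod.intCast_zmod_cast C.1).symm (ZMod.intCast_zmod_cast C.2).symm
  -- divisibility facts mod p from the hypothesis
  have hdvd : ∀ (Z : ZMod m × ZMod n) (x y k : ℤ), Z = torusProj m n (x, y) →
      torusRed m n p dm dn Z = torusProj p p (a + u * k, b + v * k) →
      ((p : ℤ) ∣ (a + u * k) - x ∧ (p : ℤ) ∣ (b + v * k) - y) := by
    intro Z x y k hZ hred
    rw [hZ, red_proj] at hred
    have h1 : ((x : ZMod p)) = ((a + u * k : ℤ) : ZMod p) := congrArg Prod.fst hred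
    have h2 : ((y : ZMod p)) = ((b + v * k : ℤ) : ZMod p) := congrArg Prod.snd hred
    exact ⟨Int.ModEq.dvd ((ZMod.intCast_eq_intCast_iff _ _ _).mp h1),
      Int.ModEq.dvd ((ZMod.intCast_eq_intCast_iff _ _ _).mp h2)⟩
  obtain ⟨hpx₁, hpy₁⟩ := hdvd A x₁ y₁ k₁ hAl hA
  obtain ⟨hpx₂, hpy₂⟩ := hdvd B x₂ y₂ k₂ hBl hB
  obtain ⟨hpx₃, hpy₃⟩ := hdvd C x₃ y₃ k₃ hCl hC
  -- CRT constructions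
  obtain ⟨u', hu'p, hu'm⟩ := int_crt2 (p : ℤ) (m' : ℤ) u 1 ipm
  obtain ⟨v', hv'p, hv'n⟩ := int_crt2 (p : ℤ) (n' : ℤ) v 1 ipn
  obtain ⟨a', ha'p, ha'm⟩ := int_crt2 (p : ℤ) (m' : ℤ) a 0 ipm
  obtain ⟨b', hb'p, hb'n⟩ := int_crt2 (p : ℤ) (n' : ℤ) b 0 ipn
  obtain ⟨κ₁, hκ₁p, hκ₁m, hκ₁n⟩ := int_crt3 (p : ℤ) (m' : ℤ) (n' : ℤ) k₁ x₁ y₁ ipm ipn imn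
  obtain ⟨κ₂, hκ₂p, hκ₂m, hκ₂n⟩ := int_crt3 (p : ℤ) (m' : ℤ) (n' : ℤ) k₂ x₂ y₂ ipm ipn imn
  obtain ⟨κ₃, hκ₃p, hκ₃m, hκ₃n⟩ := int_crt3 (p : ℤ) (m' : ℤ) (n' : ℤ) k₃ x₃ y₃ ipm ipn imn
  -- m divides the x-discrepancies, n divides the y-discrepancies
  have hmx : ∀ x k κ : ℤ, (p : ℤ) ∣ (a + u * k) - x → (p : ℤ) ∣ κ - k → (m' : ℤ) ∣ κ - x →
      (m : ℤ) ∣ (a' + u' * κ) - x := by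
    intro x k κ hp1 hp2 hm2
    have hpd : (p : ℤ) ∣ (a' + u' * κ) - x := by
      have e : (a' + u' * κ) - x = (a' - a) + ((u' - u) * κ + (u * (κ - k) + ((a + u * k) - x))) := by
        ring
      rw [e]
      exact dvd_add ha'p (dvd_add (hu'p.mul_right κ) (dvd_add (hp2.mul_left u) hp1))
    have hmd : (m' : ℤ) ∣ (a' + u' * κ) - x := by
      have e : (a' + u' * κ) - x = (a' - 0) + ((u' - 1) * κ + (κ - x)) := by ring
      rw [e]
      exact dvd_add ha'm (dvd_add (hu'm.mul_right κ) hm2)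
    have : ((p : ℤ) * (m' : ℤ)) ∣ (a' + u' * κ) - x := ipm.mul_dvd hpd hmd
    rwa [hmeq, Nat.cast_mul]
  have hny : ∀ y k κ : ℤ, (p : ℤ) ∣ (b + v * k) - y → (p : ℤ) ∣ κ - k → (n' : ℤ) ∣ κ - y →
      (n : ℤ) ∣ (b' + v' * κ) - y := by
    intro y k κ hp1 hp2 hn2
    have hpd : (p : ℤ) ∣ (b' + v' * κ) - y := by
      have e : (b' + v' * κ) - y = (b' - b) + ((v' - v) * κ + (v * (κ - k) + ((b + v * k) - y))) := by
        ring
      rw [e]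
      exact dvd_add hb'p (dvd_add (hv'p.mul_right κ) (dvd_add (hp2.mul_left v) hp1))
    have hnd : (n' : ℤ) ∣ (b' + v' * κ) - y := by
      have e : (b' + v' * κ) - y = (b' - 0) + ((v' - 1) * κ + (κ - y)) := by ring
      rw [e]
      exact dvd_add hb'n (dvd_add (hv'n.mul_right κ) hn2)
    have : ((p : ℤ) * (n' : ℤ)) ∣ (b' + v' * κ) - y := ipn.mul_dvd hpd hnd
    rwa [hneq, Nat.cast_mul]
  -- conclude
  have final : ∀ (Z : ZMod m × ZMod n) (x y κ : ℤ), Z = torusProj m n (x, y) →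
      (m : ℤ) ∣ (a' + u' * κ) - x → (n : ℤ) ∣ (b' + v' * κ) - y →
      Z = torusProj m n (a' + u' * κ, b' + v' * κ) := by
    intro Z x y κ hZ h₁ h₂
    rw [hZ]
    unfold torusProj
    refine Prod.ext ?_ ?_
    · exact (ZMod.intCast_eq_intCast_iff _ _ _).mpr (Int.modEq_iff_dvd.mpr h₁)
    · exact (ZMod.intCast_eq_intCast_iff _ _ _).mpr (Int.modEq_iff_dvd.mpr h₂)
  exact collin_of_param m n A B C a' b' u' v' κ₁ κ₂ κ₃
    (final A x₁ y₁ κ₁ hAl (hmx x₁ k₁ κ₁ hpx₁ hκ₁p hκ₁m) (hny y₁ k₁ κ₁ hpy₁ hκ₁p hκ₁n))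
    (final B x₂ y₂ κ₂ hBl (hmx x₂ k₂ κ₂ hpx₂ hκ₂p hκ₂m) (hny y₂ k₂ κ₂ hpy₂ hκ₂p hκ₂n))
    (final C x₃ y₃ κ₃ hCl (hmx x₃ k₃ κ₃ hpx₃ hκ₃p hκ₃m) (hny y₃ k₃ κ₃ hpy₃ hκ₃p hκ₃n))

end TauAux

namespace TauAux

lemma exists_section (m n p m' n' : ℕ) [NeZero m] [NeZero n] [NeZero p]
    (cpm : Nat.Coprime p m') (cpn : Nat.Coprime p n')
    (dm : p ∣ m) (dn : p ∣ n) :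
    ∃ s : ZMod p × ZMod p → ZMod m × ZMod n, ∀ q, torusRed m n p dm dn (s q) = q := by
  have ipm : IsCoprime (p : ℤ) (m' : ℤ) := Nat.isCoprime_iff_coprime.mpr cpm
  have ipn : IsCoprime (p : ℤ) (n' : ℤ) := Nat.isCoprime_iff_coprime.mpr cpn
  obtain ⟨e, hep, -⟩ := int_crt2 (p : ℤ) (m' : ℤ) 1 0 ipm
  obtain ⟨f, hfp, -⟩ := int_crt2 (p : ℤ) (n' : ℤ) 1 0 ipn
  have he1 : ((e : ℤ) : ZMod p) = ((1 : ℤ) : ZMod p) :=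
    (ZMod.intCast_eq_intCast_iff _ _ _).mpr (Int.modEq_iff_dvd.mpr
      (by rw [show (1 : ℤ) - e = -(e - 1) from by ring]; exact dvd_neg.mpr hep))
  have hf1 : ((f : ℤ) : ZMod p) = ((1 : ℤ) : ZMod p) :=
    (ZMod.intCast_eq_intCast_iff _ _ _).mpr (Int.modEq_iff_dvd.mpr
      (by rw [show (1 : ℤ) - f = -(f - 1) from by ring]; exact dvd_neg.mpr hfp))
  refine ⟨fun q => (((e * ZMod.cast q.1 : ℤ) : ZMod m), ((f * ZMod.cast q.2 : ℤ) : ZMod n)),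
    fun q => ?_⟩
  unfold torusRed
  refine Prod.ext ?_ ?_
  · show ZMod.castHom dm (ZMod p) ((e * ZMod.cast q.1 : ℤ) : ZMod m) = q.1
    rw [map_intCast]
    push_cast

    have : ((e : ℤ) : ZMod p) = 1 := by rw [he1]; norm_num
    rw [this, one_mul]
  · show ZMod.castHom dn (ZMod p) ((f * ZMod.cast q.2 : ℤ) : ZMod n) = q.2
    rw [map_intCast]
    push_cast

    have : ((f : ℤ) : ZMod p) = 1 := by rw [hf1]; norm_num
    rw [this, one_mul]

lemma noThree_of_subpair (m n : ℕ) (X : Set (ZMod m × ZMod n)) (P Q : ZMod m × ZMod n)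
    (h : ∀ x ∈ X, x = P ∨ x = Q) : NoThreeInLine m n X := by
  intro L _ A hA B hB C hC _ _ _
  rcases h A hA with rfl | rfl <;> rcases h B hB with h' | h' <;>
    rcases h C hC with h'' | h'' <;> simp [h', h'']

end TauAux

/-- Theorem 4.5: if p = gcd(m,n) is an odd prime with
gcd(pm,n) = gcd(m,pn) = p, then τ(T_{m×n}) = τ(T_{p×p}). -/
theorem tau_eq_tau_gcd (m n p : ℕ) (hm : 1 < m) (hn : 1 < n)
    (hgcd : Nat.gcd m n = p) (hp : p.Prime) (hodd : Odd p)
    (h1 : Nat.gcd (p * m) n = p) (h2 : Nat.gcd m (p * n) = p) :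
    tau m n = tau p p := by
  haveI : NeZero m := ⟨by omega⟩
  haveI : NeZero n := ⟨by omega⟩
  haveI : NeZero p := ⟨hp.ne_zero⟩
  haveI : Fact (1 < p) := ⟨hp.one_lt⟩
  have dm : p ∣ m := hgcd ▸ Nat.gcd_dvd_left m n
  have dn : p ∣ n := hgcd ▸ Nat.gcd_dvd_right m n
  set m' : ℕ := m / p with hm'
  set n' : ℕ := n / p with hn'
  have hmeq : m = p * m' := (Nat.mul_div_cancel' dm).symm
  have hneq : n = p * n' := (Nat.mul_div_cancel' dn).symm
  have e1 : Nat.gcd (p * m') n' = 1 := by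
    have h1' : Nat.gcd (p * (p * m')) (p * n') = p := by rw [← hmeq, ← hneq]; exact h1
    rw [Nat.gcd_mul_left] at h1'
    exact Nat.eq_of_mul_eq_mul_left hp.pos (h1'.trans (mul_one p).symm)
  have e2 : Nat.gcd m' (p * n') = 1 := by
    have h2' : Nat.gcd (p * m') (p * (p * n')) = p := by rw [← hmeq, ← hneq]; exact h2
    rw [Nat.gcd_mul_left] at h2'
    exact Nat.eq_of_mul_eq_mul_left hp.pos (h2'.trans (mul_one p).symm)
  have cpn : Nat.Coprime p n' := Nat.Coprime.coprime_dvd_left (dvd_mul_right p m') e1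
  have cmn : Nat.Coprime m' n' := Nat.Coprime.coprime_dvd_left (dvd_mul_left m' p) e1
  have cpm : Nat.Coprime p m' :=
    (Nat.Coprime.coprime_dvd_right (dvd_mul_right p n') e2).symm
  have key : {k : ℕ | ∃ X : Set (ZMod m × ZMod n), NoThreeInLine m n X ∧ X.ncard = k}
      = {k : ℕ | ∃ X : Set (ZMod p × ZMod p), NoThreeInLine p p X ∧ X.ncard = k} := by
    ext k
    simp only [Set.mem_setOf_eq]
    constructor
    · rintro ⟨X, hX, rfl⟩
      by_cases hinj : Set.InjOn (torusRed m n p dm dn) X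
      · refine ⟨torusRed m n p dm dn '' X, ?_, Set.ncard_image_of_injOn hinj⟩
        rw [TauAux.noThree_iff]
        rintro P ⟨A, hAX, rfl⟩ Q ⟨B, hBX, rfl⟩ R ⟨C, hCX, rfl⟩ hcol
        have hres := TauAux.noThree_iff.mp hX A hAX B hBX C hCX
          (TauAux.collin_lift m n p m' n' hmeq hneq cpm cpn cmn dm dn hcol)
        rcases hres with h | h | h
        · exact Or.inl (congrArg _ h)
        · exact Or.inr (Or.inl (congrArg _ h))
        · exact Or.inr (Or.inr (congrArg _ h))
      · rw [Set.InjOn] at hinj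
        push_neg at hinj
        obtain ⟨A, hAX, B, hBX, hred, hAB⟩ := hinj
        have hpair : ∀ C ∈ X, C = A ∨ C = B := by
          intro C hCX
          by_contra hc
          push_neg at hc
          obtain ⟨hCA, hCB⟩ := hc
          obtain ⟨L, hL, hm1, hm3, -⟩ :=
            TauAux.collin_two p p (torusRed m n p dm dn A) (torusRed m n p dm dn C)
          have hcol : TauAux.Collin p p (torusRed m n p dm dn A) (torusRed m n p dm dn B)
              (torusRed m n p dm dn C) := ⟨L, hL, hm1, hred ▸ hm1, hm3⟩
          have hres := TauAux.noThree_iff.mp hX A hAX B hBX C hCX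
            (TauAux.collin_lift m n p m' n' hmeq hneq cpm cpn cmn dm dn hcol)
          rcases hres with h | h | h
          · exact hAB h
          · exact hCA h.symm
          · exact hCB h.symm
        have hXeq : X = {A, B} := by
          apply Set.eq_of_subset_of_subset
          · intro x hx
            rcases hpair x hx with rfl | rfl
            · exact Set.mem_insert _ _
            · exact Set.mem_insert_of_mem _ rfl
          · rintro x (rfl | rfl)
            · exact hAX
            · exact hBX
        refine ⟨{((0 : ZMod p), (0 : ZMod p)), ((1 : ZMod p), (0 : ZMod p))},
          TauAux.noThree_of_subpair p p _ _ _ (fun x hx => by simpa using hx), ?_⟩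
        rw [hXeq, Set.ncard_pair hAB, Set.ncard_pair
          (fun h => zero_ne_one (congrArg Prod.fst h))]
    · rintro ⟨Y, hY, rfl⟩
      obtain ⟨s, hs⟩ := TauAux.exists_section m n p m' n' cpm cpn dm dn
      have hsinj : Function.Injective s := fun q q' h => by rw [← hs q, ← hs q', h]
      refine ⟨s '' Y, ?_, Set.ncard_image_of_injective Y hsinj⟩
      rw [TauAux.noThree_iff]
      rintro P ⟨α, hα, rfl⟩ Q ⟨β, hβ, rfl⟩ R ⟨γ, hγ, rfl⟩ hcol
      have hc' := TauAux.collin_red m n p dm dn hcol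
      rw [hs α, hs β, hs γ] at hc'
      rcases TauAux.noThree_iff.mp hY α hα β hβ γ hγ hc' with h | h | h
      · exact Or.inl (congrArg s h)
      · exact Or.inr (Or.inl (congrArg s h))
      · exact Or.inr (Or.inr (congrArg s h))
  unfold tau
  rw [key]
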